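/- Let ν be a norm on ℝ^d, t in the polar set of ν, δ ∈ (0, 1/2), and K > 0. Let y_1, …, y_m ∈ ℝ^d with ν(y_i) ≥ K for all i, such that y_1, …, y_{l1} ∈ Y_{t,δ} and y_{l1+1}, …, y_m ∉ Y_{t,δ} (so m = l1 + l2). Suppose l1 ≥ l2 and t·(∑_{i=1}^m y_i) < (K/8)·m. Then ∑_{i=1}^m s_t(y_i) ≥ (K/8)·m. -/

import Mathlib

open scoped RealInnerProductSpace BigOperators

/-- if the first `l1` increments lie in the cone `Y_{t,δ}`, the
remaining `l2 = m - l1` do not, `l1 ≥ l2`, each increment has `ν`-length at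
least `K`, and `t·(∑ y_i) < (K/8)m`, then `∑ s_t(y_i) ≥ (K/8)m`. -/
theorem surcharge_sum_reordered_case {d m : ℕ}
    (ν : Seminorm ℝ (EuclideanSpace ℝ (Fin d)))
    (t : EuclideanSpace ℝ (Fin d))
    (ht : ∀ y, ⟪t, y⟫ ≤ ν y)
    (δ K : ℝ) (hδ0 : 0 < δ) (hδ : δ < 1 / 2) (hK : 0 < K)
    (l1 l2 : ℕ) (hm : m = l1 + l2) (hl : l2 ≤ l1)
    (y : Fin m → EuclideanSpace ℝ (Fin d))
    (hKν : ∀ i, K ≤ ν (y i))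
    (hin : ∀ i : Fin m, (i : ℕ) < l1 → (1 - δ) * ν (y i) ≤ ⟪t, y i⟫)
    (hout : ∀ i : Fin m, l1 ≤ (i : ℕ) → ¬ ((1 - δ) * ν (y i) ≤ ⟪t, y i⟫))
    (hsum : ⟪t, ∑ i, y i⟫ < K / 8 * m) :
    K / 8 * m ≤ ∑ i, (ν (y i) - ⟪t, y i⟫) := by
  have h1 : (K : ℝ) * m ≤ ∑ i, (ν (y i) : ℝ) := by
    calc (K : ℝ) * m = ∑ _i : Fin m, K := by simp [mul_comm]
    _ ≤ ∑ i, (ν (y i) : ℝ) := Finset.sum_le_sum fun i _ => hKν i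
  have h2 : ⟪t, ∑ i, y i⟫ = ∑ i, ⟪t, y i⟫ := by rw [inner_sum]
  have h3 : ∑ i, ((ν (y i) : ℝ) - ⟪t, y i⟫) = (∑ i, (ν (y i) : ℝ)) - ∑ i, ⟪t, y i⟫ :=
    Finset.sum_sub_distrib _ _
  rw [h3]
  rw [h2] at hsum
  nlinarith [(Nat.cast_nonneg m : (0:ℝ) ≤ m), hK]
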